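/- Seller-side (symmetric) inequality in expectation: for every nondecreasing c : [0,1] → ℝ, every Borel probability measure ν on ℝ with ∫|v| dν(v) < ∞, and every λ ∈ (0,1), one has (1 − λ)·FB ≤ u_B + u_S · ln(1/λ), where FB := ∫_ℝ ∫₀¹ max(v − c(q), 0) dq dν(v), u_B := ∫_ℝ sup_{p ∈ ℝ} ((v − p)·x(p)) dν(v), and u_S := ∫₀¹ sup_{p ∈ ℝ} ((p − c(q))·ν({v : v ≥ p})) dq. -/

import Mathlib

open MeasureTheory Set

/-- The probability that the seller (with cost curve `c` on quantiles in `[0,1]`)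
accepts a price `p`: the Lebesgue measure of `{q ∈ [0,1] : c q ≤ p}`. -/
noncomputable def accProb (c : ℝ → ℝ) (p : ℝ) : ℝ :=
  (volume {q : ℝ | q ∈ Icc (0:ℝ) 1 ∧ c q ≤ p}).toReal

/-- First-best gains from trade, in expectation over the buyer value `v ∼ ν`. -/
noncomputable def FB (c : ℝ → ℝ) (ν : Measure ℝ) : ℝ :=
  ∫ v, (∫ q in (0:ℝ)..1, max (v - c q) 0) ∂ν

/-- The buyer's expected optimal proposer utility. -/
noncomputable def uB (c : ℝ → ℝ) (ν : Measure ℝ) : ℝ :=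
  ∫ v, (⨆ p : ℝ, (v - p) * accProb c p) ∂ν

/-- The seller's expected optimal proposer utility. -/
noncomputable def uS (c : ℝ → ℝ) (ν : Measure ℝ) : ℝ :=
  ∫ q in (0:ℝ)..1, ⨆ p : ℝ, (p - c q) * (ν {v : ℝ | p ≤ v}).toReal

set_option linter.unusedSectionVars false
set_option maxHeartbeats 1000000
open Filter



noncomputable def tl (ν : Measure ℝ) (p : ℝ) : ℝ := (ν {v : ℝ | p ≤ v}).toReal

noncomputable def Phi (ν : Measure ℝ) (τ : ℝ) : ℝ :=
  if 0 < τ ∧ τ < 1 then sInf {y : ℝ | tl ν y < τ} else 0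

section tail
variable (ν : Measure ℝ) [IsProbabilityMeasure ν]

lemma tl_nonneg (p : ℝ) : 0 ≤ tl ν p := ENNReal.toReal_nonneg

lemma tl_le_one (p : ℝ) : tl ν p ≤ 1 := by
  have h : ν {v : ℝ | p ≤ v} ≤ 1 := (measure_mono (subset_univ _)).trans_eq measure_univ
  have := ENNReal.toReal_mono (by norm_num) h
  simpa [tl] using this

lemma tl_anti : Antitone (tl ν) := by
  intro a b hab
  apply ENNReal.toReal_mono (measure_ne_top ν _)
  exact measure_mono (fun v hv => le_trans hab hv)

lemma exists_tl_lt {τ : ℝ} (hτ : 0 < τ) : ∃ y : ℝ, tl ν y < τ := by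
  have h0 : Tendsto (fun n : ℕ => ν (Ici (n : ℝ))) atTop (nhds (ν (⋂ n : ℕ, Ici (n : ℝ)))) := by
    apply tendsto_measure_iInter_atTop
      (fun n => measurableSet_Ici.nullMeasurableSet)
      (fun a b hab => Ici_subset_Ici.2 (by exact_mod_cast hab))
    exact ⟨0, measure_ne_top ν _⟩
  have hempty : (⋂ n : ℕ, Ici ((n : ℝ))) = ∅ := by
    ext x; simp only [mem_iInter, mem_Ici, mem_empty_iff_false, iff_false, not_forall, not_le]
    obtain ⟨n, hn⟩ := exists_nat_gt x
    exact ⟨n, hn⟩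
  rw [hempty, measure_empty] at h0
  have := (ENNReal.tendsto_toReal (by norm_num)).comp h0
  simp only [Function.comp, ENNReal.toReal_zero] at this
  have := this.eventually (eventually_lt_nhds hτ)
  obtain ⟨n, hn⟩ := this.exists
  refine ⟨n, ?_⟩
  have : {v : ℝ | (n:ℝ) ≤ v} = Ici (n:ℝ) := rfl
  simpa [tl, this] using hn

lemma exists_lt_tl {τ : ℝ} (hτ : τ < 1) : ∃ y : ℝ, τ < tl ν y := by
  have h0 : Tendsto (fun n : ℕ => ν (Ici (-(n : ℝ)))) atTop (nhds (ν (⋃ n : ℕ, Ici (-(n : ℝ))))) := by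
    apply tendsto_measure_iUnion_atTop
    intro a b hab
    exact Ici_subset_Ici.2 (by simp; exact_mod_cast hab)
  have huniv : (⋃ n : ℕ, Ici (-(n : ℝ))) = univ := by
    ext x; simp only [mem_iUnion, mem_Ici, mem_univ, iff_true]
    obtain ⟨n, hn⟩ := exists_nat_gt (-x)
    exact ⟨n, by linarith⟩
  rw [huniv, measure_univ] at h0
  have := (ENNReal.tendsto_toReal (by norm_num)).comp h0
  simp only [Function.comp, ENNReal.toReal_one] at this
  have := this.eventually (eventually_gt_nhds hτ)
  obtain ⟨n, hn⟩ := this.exists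
  exact ⟨-(n:ℝ), by simpa [tl, Ici] using hn⟩

lemma tlS_nonempty {τ : ℝ} (hτ : 0 < τ) : {y : ℝ | tl ν y < τ}.Nonempty := exists_tl_lt ν hτ

lemma tlS_bddBelow {τ : ℝ} (hτ : τ < 1) : BddBelow {y : ℝ | tl ν y < τ} := by
  obtain ⟨y₀, hy₀⟩ := exists_lt_tl ν hτ
  refine ⟨y₀, fun y hy => ?_⟩
  by_contra h
  push_neg at h
  exact absurd (tl_anti ν h.le) (by simp only [mem_setOf_eq] at hy; linarith)

lemma phi_ge {τ y : ℝ} (hτ : τ ∈ Ioo (0:ℝ) 1) (h : τ < tl ν y) : y ≤ Phi ν τ := by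
  rw [Phi, if_pos ⟨hτ.1, hτ.2⟩]
  apply le_csInf (tlS_nonempty ν hτ.1)
  intro b hb
  by_contra hby
  push_neg at hby
  exact absurd (tl_anti ν hby.le) (by simp only [mem_setOf_eq] at hb; linarith)

lemma phi_le {τ y : ℝ} (hτ : τ ∈ Ioo (0:ℝ) 1) (h : tl ν y < τ) : Phi ν τ ≤ y := by
  rw [Phi, if_pos ⟨hτ.1, hτ.2⟩]
  exact csInf_le (tlS_bddBelow ν hτ.2) h

lemma tl_phi {τ : ℝ} (hτ : τ ∈ Ioo (0:ℝ) 1) : τ ≤ tl ν (Phi ν τ) := by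
  set m := Phi ν τ with hm
  have key : ∀ y < m, τ ≤ tl ν y := by
    intro y hy
    by_contra h
    push_neg at h
    exact absurd (phi_le ν hτ h) (by rw [← hm]; linarith)
  -- continuity from above
  have h0 : Tendsto (fun n : ℕ => ν (Ici (m - 1/(n+1 : ℝ)))) atTop
      (nhds (ν (⋂ n : ℕ, Ici (m - 1/(n+1 : ℝ))))) := by
    apply tendsto_measure_iInter_atTop (fun n => measurableSet_Ici.nullMeasurableSet)
    · intro a b hab
      apply Ici_subset_Ici.2
      have : (1:ℝ)/(b+1) ≤ 1/(a+1) := by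
        apply one_div_le_one_div_of_le (by positivity)
        exact_mod_cast (by have := (Nat.cast_le (α := ℝ)).2 hab; linarith)
      linarith
    · exact ⟨0, measure_ne_top ν _⟩
  have hint : (⋂ n : ℕ, Ici (m - 1/(n+1 : ℝ))) = Ici m := by
    ext x
    simp only [mem_iInter, mem_Ici]
    constructor
    · intro h
      by_contra hx
      push_neg at hx
      obtain ⟨n, hn⟩ := exists_nat_gt (1/(m - x))
      have hmx : 0 < m - x := by linarith
      have h1 : 1/(n+1:ℝ) < m - x := by
        rw [div_lt_iff₀ (by positivity)]
        rw [div_lt_iff₀ hmx] at hn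
        calc (1:ℝ) < (n:ℝ) * (m-x) := hn
        _ ≤ (m-x)*(n+1) := by nlinarith
      have := h n
      linarith
    · intro h n
      have h1 : (0:ℝ) < 1/(n+1:ℝ) := by positivity
      linarith
  rw [hint] at h0
  have hle : ∀ n : ℕ, ENNReal.ofReal τ ≤ ν (Ici (m - 1/(n+1:ℝ))) := by
    intro n
    have h1 : (0:ℝ) < 1/(n+1:ℝ) := by positivity
    have h2 : τ ≤ tl ν (m - 1/(n+1:ℝ)) := key _ (by linarith)
    have : ENNReal.ofReal τ ≤ ENNReal.ofReal (tl ν (m - 1/(n+1:ℝ))) := ENNReal.ofReal_le_ofReal h2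
    unfold tl at this
    rwa [ENNReal.ofReal_toReal (measure_ne_top ν _)] at this
  have hlim : ENNReal.ofReal τ ≤ ν (Ici m) := ge_of_tendsto' h0 (fun n => hle n)
  have : ENNReal.ofReal τ ≤ ν {v : ℝ | m ≤ v} := by simpa [Ici] using hlim
  have h2 := ENNReal.toReal_mono (measure_ne_top ν _) this
  rw [ENNReal.toReal_ofReal hτ.1.le] at h2
  exact h2

lemma phi_antiOn : AntitoneOn (Phi ν) (Ioo (0:ℝ) 1) := by
  intro a ha b hb hab
  rw [Phi, if_pos ⟨hb.1, hb.2⟩, Phi, if_pos ⟨ha.1, ha.2⟩]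
  apply csInf_le_csInf (tlS_bddBelow ν hb.2) (tlS_nonempty ν ha.1)
  intro y hy
  simp only [mem_setOf_eq] at hy ⊢
  linarith

lemma phi_meas : Measurable (Phi ν) := by
  apply measurable_of_Iio
  intro r
  have : Phi ν ⁻¹' Iio r =
      ((Ioo (0:ℝ) 1 ∩ Phi ν ⁻¹' Iio r)) ∪ ((Ioo (0:ℝ) 1)ᶜ ∩ (if (0:ℝ) < r then univ else ∅)) := by
    ext τ
    by_cases hτ : τ ∈ Ioo (0:ℝ) 1
    · simp only [mem_preimage, mem_Iio, mem_union, mem_inter_iff, hτ, true_and, mem_compl_iff,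
        not_true, false_and, or_false]
    · have : Phi ν τ = 0 := by
        rw [Phi, if_neg]; rintro ⟨h1, h2⟩; exact hτ ⟨h1, h2⟩
      simp only [mem_preimage, mem_Iio, this, mem_union, mem_inter_iff, hτ, false_and, false_or,
        mem_compl_iff, not_false_iff, true_and]
      by_cases hr : (0:ℝ) < r <;> simp [hr]
  rw [this]
  apply MeasurableSet.union
  · have hoc : OrdConnected (Ioo (0:ℝ) 1 ∩ Phi ν ⁻¹' Iio r) := by
      constructor
      rintro x ⟨hx1, hx2⟩ y ⟨hy1, hy2⟩ z hz
      have hz1 : z ∈ Ioo (0:ℝ) 1 := ⟨lt_of_lt_of_le hx1.1 hz.1, lt_of_le_of_lt hz.2 hy1.2⟩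
      refine ⟨hz1, ?_⟩
      simp only [mem_preimage, mem_Iio] at hx2 ⊢
      exact lt_of_le_of_lt (phi_antiOn ν hx1 hz1 hz.1) hx2
    exact hoc.measurableSet
  · by_cases hr : (0:ℝ) < r <;> simp [hr, measurableSet_Ioo.compl]

lemma phi_map_set (y : ℝ) :
    volume {τ : ℝ | τ ∈ Ioo (0:ℝ) 1 ∧ y ≤ Phi ν τ} = ν {v : ℝ | y ≤ v} := by
  set t := tl ν y with ht
  have ht0 : 0 ≤ t := tl_nonneg ν y
  have ht1 : t ≤ 1 := tl_le_one ν y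
  have hlow : Ioo (0:ℝ) t ⊆ {τ : ℝ | τ ∈ Ioo (0:ℝ) 1 ∧ y ≤ Phi ν τ} := by
    intro τ hτ
    have hτ1 : τ ∈ Ioo (0:ℝ) 1 := ⟨hτ.1, lt_of_lt_of_le hτ.2 ht1⟩
    exact ⟨hτ1, phi_ge ν hτ1 hτ.2⟩
  have hup : {τ : ℝ | τ ∈ Ioo (0:ℝ) 1 ∧ y ≤ Phi ν τ} ⊆ Ioc (0:ℝ) t := by
    rintro τ ⟨hτ1, hτ2⟩
    refine ⟨hτ1.1, ?_⟩
    by_contra h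
    push_neg at h
    have h2 : Phi ν τ ≤ y := phi_le ν hτ1 h
    have h3 : Phi ν τ = y := le_antisymm h2 hτ2
    have h4 : τ ≤ tl ν (Phi ν τ) := tl_phi ν hτ1
    rw [h3] at h4
    linarith
  have h1 : volume (Ioo (0:ℝ) t) = ENNReal.ofReal t := by simp [Real.volume_Ioo]
  have h2 : volume (Ioc (0:ℝ) t) = ENNReal.ofReal t := by simp [Real.volume_Ioc]
  have hν' : ENNReal.ofReal t = ν {v : ℝ | y ≤ v} := by
    rw [ht]; unfold tl; rw [ENNReal.ofReal_toReal (measure_ne_top ν _)]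
  refine le_antisymm ?_ ?_
  · calc volume {τ : ℝ | τ ∈ Ioo (0:ℝ) 1 ∧ y ≤ Phi ν τ} ≤ volume (Ioc (0:ℝ) t) :=
        measure_mono hup
    _ = ν {v : ℝ | y ≤ v} := by rw [h2, hν']
  · calc ν {v : ℝ | y ≤ v} = volume (Ioo (0:ℝ) t) := by rw [h1, hν']
    _ ≤ volume {τ : ℝ | τ ∈ Ioo (0:ℝ) 1 ∧ y ≤ Phi ν τ} := measure_mono hlow

lemma phi_map :
    Measure.map (Phi ν) (volume.restrict (Ioo (0:ℝ) 1)) = ν := by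
  have h1 : IsFiniteMeasure (Measure.map (Phi ν) (volume.restrict (Ioo (0:ℝ) 1))) := by
    constructor
    rw [Measure.map_apply (phi_meas ν) MeasurableSet.univ]
    have h2 : (volume.restrict (Ioo (0:ℝ) 1)) (Phi ν ⁻¹' univ) ≤ volume (Ioo (0:ℝ) 1) := by
      rw [Measure.restrict_apply (by simp)]
      exact measure_mono inter_subset_right
    refine lt_of_le_of_lt h2 ?_
    simp [Real.volume_Ioo]
  apply Measure.ext_of_Ici
  intro a
  rw [Measure.map_apply (phi_meas ν) measurableSet_Ici]
  have h3 : Phi ν ⁻¹' Ici a ∩ Ioo (0:ℝ) 1 = {τ : ℝ | τ ∈ Ioo (0:ℝ) 1 ∧ a ≤ Phi ν τ} := by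
    ext τ
    simp only [mem_inter_iff, mem_preimage, mem_Ici, mem_setOf_eq, and_comm]
  rw [Measure.restrict_apply (phi_meas ν measurableSet_Ici), h3, phi_map_set]
  rfl

lemma phi_int (hν : Integrable (fun v : ℝ => v) ν) :
    IntegrableOn (Phi ν) (Ioo (0:ℝ) 1) := by
  have : Integrable (fun v : ℝ => v) (Measure.map (Phi ν) (volume.restrict (Ioo (0:ℝ) 1))) := by
    rw [phi_map]; exact hν
  have h2 := this.comp_measurable (phi_meas ν)
  exact h2

lemma integral_phi_eq (g : ℝ → ℝ) (hg : AEStronglyMeasurable g ν) :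
    ∫ v, g v ∂ν = ∫ τ in Ioo (0:ℝ) 1, g (Phi ν τ) := by
  have h := integral_map (μ := volume.restrict (Ioo (0:ℝ) 1)) ((phi_meas ν).aemeasurable)
    (f := g) (by rw [phi_map]; exact hg)
  rw [phi_map] at h
  exact h

noncomputable def BB (c : ℝ → ℝ) (v : ℝ) : ℝ := ⨆ p : ℝ, (v - p) * accProb c p

noncomputable def SSf (ν : Measure ℝ) (z : ℝ) : ℝ := ⨆ p : ℝ, (p - z) * tl ν p

noncomputable def ct (c : ℝ → ℝ) (q : ℝ) : ℝ := c (max 0 (min 1 q))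

section part3
variable (ν : Measure ℝ) [IsProbabilityMeasure ν] (c : ℝ → ℝ)

lemma clamp_mem (q : ℝ) : max 0 (min 1 q) ∈ Icc (0:ℝ) 1 :=
  ⟨le_max_left _ _, max_le (by norm_num) (min_le_left _ _)⟩

lemma ct_mono (hc : MonotoneOn c (Icc (0:ℝ) 1)) : Monotone (ct c) := by
  intro a b hab
  exact hc (clamp_mem a) (clamp_mem b) (max_le_max le_rfl (min_le_min le_rfl hab))

lemma ct_eq {q : ℝ} (hq : q ∈ Icc (0:ℝ) 1) : ct c q = c q := by
  unfold ct
  rw [min_eq_right hq.2, max_eq_right hq.1]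

lemma accProb_nonneg (p : ℝ) : 0 ≤ accProb c p := ENNReal.toReal_nonneg

lemma accProb_le_one (p : ℝ) : accProb c p ≤ 1 := by
  have h : volume {q : ℝ | q ∈ Icc (0:ℝ) 1 ∧ c q ≤ p} ≤ volume (Icc (0:ℝ) 1) :=
    measure_mono (fun q hq => hq.1)
  have h2 := ENNReal.toReal_mono (by simp [Real.volume_Icc]) h
  simpa [accProb, Real.volume_Icc] using h2

lemma acc_term_le (hc : MonotoneOn c (Icc (0:ℝ) 1)) (v p : ℝ) :
    (v - p) * accProb c p ≤ max (v - c 0) 0 := by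
  by_cases hp : p < c 0
  · have : {q : ℝ | q ∈ Icc (0:ℝ) 1 ∧ c q ≤ p} = ∅ := by
      ext q
      simp only [mem_setOf_eq, mem_empty_iff_false, iff_false, not_and]
      intro hq hcq
      exact absurd (hc (by norm_num) hq hq.1) (by linarith)
    unfold accProb
    rw [this]
    simp
  · push_neg at hp
    by_cases hv : v - p ≤ 0
    · exact le_trans (mul_nonpos_of_nonpos_of_nonneg hv (accProb_nonneg c p)) (le_max_right _ _)
    · push_neg at hv
      calc (v - p) * accProb c p ≤ (v - p) * 1 :=
            mul_le_mul_of_nonneg_left (accProb_le_one c p) hv.le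
      _ = v - p := mul_one _
      _ ≤ v - c 0 := by linarith
      _ ≤ max (v - c 0) 0 := le_max_left _ _

lemma BB_bdd (hc : MonotoneOn c (Icc (0:ℝ) 1)) (v : ℝ) :
    BddAbove (range fun p : ℝ => (v - p) * accProb c p) := by
  refine ⟨max (v - c 0) 0, ?_⟩
  rintro x ⟨p, rfl⟩
  exact acc_term_le c hc v p

lemma le_BB (hc : MonotoneOn c (Icc (0:ℝ) 1)) (v p : ℝ) :
    (v - p) * accProb c p ≤ BB c v := le_ciSup (BB_bdd c hc v) p

lemma BB_nonneg (hc : MonotoneOn c (Icc (0:ℝ) 1)) (v : ℝ) : 0 ≤ BB c v := by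
  have := le_BB c hc v v
  simpa using this

lemma BB_le (hc : MonotoneOn c (Icc (0:ℝ) 1)) (v : ℝ) : BB c v ≤ max (v - c 0) 0 :=
  ciSup_le (acc_term_le c hc v)

lemma BB_mono (hc : MonotoneOn c (Icc (0:ℝ) 1)) : Monotone (BB c) := by
  intro a b hab
  apply ciSup_le
  intro p
  calc (a - p) * accProb c p ≤ (b - p) * accProb c p :=
        mul_le_mul_of_nonneg_right (by linarith) (accProb_nonneg c p)
  _ ≤ BB c b := le_BB c hc b p

lemma BB_meas (hc : MonotoneOn c (Icc (0:ℝ) 1)) : Measurable (BB c) :=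
  (BB_mono c hc).measurable

lemma tl_term_le (hν : Integrable (fun v : ℝ => v) ν) (p z : ℝ) :
    (p - z) * tl ν p ≤ (∫ v, |v| ∂ν) + |z| := by
  have ht0 := tl_nonneg ν p
  have ht1 := tl_le_one ν p
  have h1 : (p - z) * tl ν p ≤ p * tl ν p + |z| := by
    have : (-z) * tl ν p ≤ |z| := by
      calc (-z) * tl ν p ≤ |z| * tl ν p :=
            mul_le_mul_of_nonneg_right (neg_le_abs z) ht0
      _ ≤ |z| * 1 := mul_le_mul_of_nonneg_left ht1 (abs_nonneg z)
      _ = |z| := mul_one _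
    nlinarith
  have h2 : p * tl ν p ≤ ∫ v, |v| ∂ν := by
    by_cases hp : p ≤ 0
    · exact le_trans (mul_nonpos_of_nonpos_of_nonneg hp ht0)
        (integral_nonneg (fun v => abs_nonneg v))
    · push_neg at hp
      have hsub : {v : ℝ | p ≤ v} ⊆ {x : ℝ | p ≤ |x|} :=
        fun v hv => le_trans hv (le_abs_self v)
      have hmono : tl ν p ≤ (ν {x : ℝ | p ≤ |x|}).toReal :=
        ENNReal.toReal_mono (measure_ne_top ν _) (measure_mono hsub)
      calc p * tl ν p ≤ p * (ν {x : ℝ | p ≤ |x|}).toReal :=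
            mul_le_mul_of_nonneg_left hmono hp.le
      _ ≤ ∫ v, |v| ∂ν :=
            mul_meas_ge_le_integral_of_nonneg (ae_of_all ν fun v => abs_nonneg v) hν.abs p
  linarith

lemma SSf_bdd (hν : Integrable (fun v : ℝ => v) ν) (z : ℝ) :
    BddAbove (range fun p : ℝ => (p - z) * tl ν p) := by
  refine ⟨(∫ v, |v| ∂ν) + |z|, ?_⟩
  rintro x ⟨p, rfl⟩
  exact tl_term_le ν hν p z

lemma le_SSf (hν : Integrable (fun v : ℝ => v) ν) (z p : ℝ) :
    (p - z) * tl ν p ≤ SSf ν z := le_ciSup (SSf_bdd ν hν z) p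

lemma SSf_nonneg (hν : Integrable (fun v : ℝ => v) ν) (z : ℝ) : 0 ≤ SSf ν z := by
  have := le_SSf ν hν z z
  simpa using this

lemma SSf_le (hν : Integrable (fun v : ℝ => v) ν) (z : ℝ) :
    SSf ν z ≤ (∫ v, |v| ∂ν) + |z| :=
  ciSup_le (fun p => tl_term_le ν hν p z)

lemma SSf_anti (hν : Integrable (fun v : ℝ => v) ν) : Antitone (SSf ν) := by
  intro a b hab
  apply ciSup_le
  intro p
  calc (p - b) * tl ν p ≤ (p - a) * tl ν p :=
        mul_le_mul_of_nonneg_right (by linarith) (tl_nonneg ν p)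
  _ ≤ SSf ν a := le_SSf ν hν a p

lemma S_ge (hν : Integrable (fun v : ℝ => v) ν) (z : ℝ) {τ : ℝ} (hτ : τ ∈ Ioo (0:ℝ) 1) :
    τ * (Phi ν τ - z) ≤ SSf ν z := by
  by_cases h : Phi ν τ - z ≤ 0
  · exact le_trans (mul_nonpos_of_nonneg_of_nonpos hτ.1.le h) (SSf_nonneg ν hν z)
  · push_neg at h
    calc τ * (Phi ν τ - z) ≤ tl ν (Phi ν τ) * (Phi ν τ - z) :=
          mul_le_mul_of_nonneg_right (tl_phi ν hτ) h.le
    _ = (Phi ν τ - z) * tl ν (Phi ν τ) := mul_comm _ _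
    _ ≤ SSf ν z := le_SSf ν hν z _

end part3

section part4
variable (ν : Measure ℝ) [IsProbabilityMeasure ν]

lemma ae_ne_vol (κ : ℝ) : ∀ᵐ τ : ℝ, τ ≠ κ := by
  have : volume ({κ} : Set ℝ) = 0 := Real.volume_singleton
  rw [ae_iff]
  convert this using 2
  ext τ; simp

lemma perq (hν : Integrable (fun v : ℝ => v) ν) {l : ℝ} (hl : l ∈ Ioo (0:ℝ) 1) (z : ℝ) :
    (1 - l) * ∫ τ in Ioo (0:ℝ) 1, max (Phi ν τ - z) 0
      ≤ l * (∫ σ in Ioo (0:ℝ) 1,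
            (Ioo (0:ℝ) (tl ν z)).indicator (fun σ => Phi ν (l*σ) - Phi ν σ) σ)
        + Real.log (1/l) * SSf ν z := by
  have hL : 0 < Real.log (1/l) := Real.log_pos (by rw [lt_div_iff₀ hl.1, one_mul]; exact hl.2)
  obtain ⟨κ, hκdef⟩ : ∃ κ, tl ν z = κ := ⟨_, rfl⟩
  rw [hκdef]
  have hκ1 : κ ≤ 1 := hκdef ▸ tl_le_one ν z
  have hκnn : 0 ≤ κ := hκdef ▸ tl_nonneg ν z
  set f : ℝ → ℝ := fun τ => Phi ν τ - z with hf
  rcases eq_or_lt_of_le hκnn with hκ0 | hκpos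
  · -- κ = 0
    have h1 : ∫ τ in Ioo (0:ℝ) 1, max (f τ) 0 = 0 := by
      rw [setIntegral_congr_fun measurableSet_Ioo (g := fun _ => (0:ℝ))]
      · simp
      · intro τ hτ
        have : Phi ν τ ≤ z := phi_le ν hτ (by rw [hκdef, ← hκ0]; exact hτ.1)
        simp only [hf]
        exact max_eq_right (by linarith)
    have h2 : (Ioo (0:ℝ) κ) = ∅ := by rw [← hκ0]; simp
    rw [h1, h2]
    simp only [indicator_empty, integral_zero, mul_zero, zero_add]
    exact mul_nonneg hL.le (SSf_nonneg ν hν z)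
  · -- 0 < κ
    have hlκpos : 0 < l * κ := mul_pos hl.1 hκpos
    have hlκκ : l * κ ≤ κ := by nlinarith [hl.2]
    have hsub : Ioo (0:ℝ) κ ⊆ Ioo (0:ℝ) 1 := fun x hx => ⟨hx.1, lt_of_lt_of_le hx.2 hκ1⟩
    have hsub2 : Ioo (0:ℝ) (l*κ) ⊆ Ioo (0:ℝ) 1 :=
      (Ioo_subset_Ioo_right hlκκ).trans hsub
    have hsub3 : Ico (l*κ) κ ⊆ Ioo (0:ℝ) 1 := fun x hx =>
      ⟨lt_of_lt_of_le hlκpos hx.1, lt_of_lt_of_le hx.2 hκ1⟩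
    have hfInt : IntegrableOn f (Ioo (0:ℝ) 1) := by
      apply (phi_int ν hν).sub
      exact integrableOn_const (by simp [Real.volume_Ioo])
    -- step1
    have step1 : ∫ τ in Ioo (0:ℝ) 1, max (f τ) 0 = ∫ τ in Ioo (0:ℝ) κ, f τ := by
      have hae : ∀ᵐ τ ∂(volume.restrict (Ioo (0:ℝ) 1)),
          max (f τ) 0 = (Ioo (0:ℝ) κ).indicator f τ := by
        filter_upwards [ae_restrict_mem measurableSet_Ioo,
          ae_restrict_of_ae (ae_ne_vol κ)] with τ hτ hne
        rcases lt_or_gt_of_ne hne with h | h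
        · have : z ≤ Phi ν τ := phi_ge ν hτ (by rw [hκdef]; exact h)
          rw [indicator_of_mem (mem_Ioo.2 ⟨hτ.1, h⟩)]
          exact max_eq_left (by simp only [hf]; linarith)
        · have : Phi ν τ ≤ z := phi_le ν hτ (by rw [hκdef]; exact h)
          rw [indicator_of_notMem (by simp only [mem_Ioo, not_and, not_lt]; intro _; linarith)]
          exact max_eq_right (by simp only [hf]; linarith)
      rw [integral_congr_ae hae, integral_indicator measurableSet_Ioo,
        Measure.restrict_restrict measurableSet_Ioo, inter_eq_self_of_subset_left hsub]
    -- step2 split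
    have hdisj : Disjoint (Ioo (0:ℝ) (l*κ)) (Ico (l*κ) κ) := by
      rw [Set.disjoint_left]
      rintro x ⟨_, h1⟩ ⟨h2, _⟩
      exact absurd h2 (not_le.2 h1)
    have hunion : Ioo (0:ℝ) (l*κ) ∪ Ico (l*κ) κ = Ioo (0:ℝ) κ :=
      Ioo_union_Ico_eq_Ioo hlκpos hlκκ
    have step2 : ∫ τ in Ioo (0:ℝ) κ, f τ
        = (∫ τ in Ioo (0:ℝ) (l*κ), f τ) + ∫ τ in Ico (l*κ) κ, f τ := by
      rw [← hunion, setIntegral_union hdisj measurableSet_Ico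
        (hfInt.mono_set hsub2) (hfInt.mono_set hsub3)]
    -- step3 seller bound
    have step3 : ∫ τ in Ico (l*κ) κ, f τ ≤ Real.log (1/l) * SSf ν z := by
      have hptw : ∀ τ ∈ Ico (l*κ) κ, f τ ≤ SSf ν z * τ⁻¹ := by
        intro τ hτ
        have hτpos : 0 < τ := lt_of_lt_of_le hlκpos hτ.1
        have hτ1 : τ ∈ Ioo (0:ℝ) 1 := hsub3 hτ
        have := S_ge ν hν z hτ1
        rw [mul_comm (SSf ν z) τ⁻¹, ← div_eq_inv_mul, le_div_iff₀ hτpos]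
        simp only [hf]
        nlinarith
      have hint2 : IntegrableOn (fun τ => SSf ν z * τ⁻¹) (Ico (l*κ) κ) := by
        apply IntegrableOn.mono_set (t := Icc (l*κ) κ) _ Ico_subset_Icc_self
        apply ContinuousOn.integrableOn_Icc
        apply ContinuousOn.mul continuousOn_const
        apply ContinuousOn.inv₀ continuousOn_id
        intro τ hτ
        exact ne_of_gt (lt_of_lt_of_le hlκpos hτ.1)
      have hmono := setIntegral_mono_on (hfInt.mono_set hsub3) hint2 measurableSet_Ico hptw
      refine le_trans hmono ?_
      rw [integral_const_mul]
      have hcomp : ∫ τ in Ico (l*κ) κ, τ⁻¹ = Real.log (1/l) := by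
        rw [integral_Ico_eq_integral_Ioo, ← integral_Ioc_eq_integral_Ioo,
          ← intervalIntegral.integral_of_le hlκκ, integral_inv]
        · congr 1
          rw [div_eq_div_iff (ne_of_gt hlκpos) (ne_of_gt hl.1)]
          ring
        · intro h
          rcases h with ⟨h1, _⟩
          rw [min_eq_left hlκκ] at h1
          exact absurd h1 (not_le.2 hlκpos)
      rw [hcomp, mul_comm]
    -- integrability of shifted Phi
    have hPhiIoo : IntegrableOn (Phi ν) (Ioo (0:ℝ) (l*κ)) := (phi_int ν hν).mono_set hsub2
    have hPhil : IntegrableOn (fun σ => Phi ν (l*σ)) (Ioo (0:ℝ) κ) := by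
      have h1 : IntervalIntegrable (Phi ν) volume 0 (l*κ) :=
        (intervalIntegrable_iff_integrableOn_Ioo_of_le hlκpos.le).2 hPhiIoo
      have h2 := h1.comp_mul_left (c := l)
      have h3 : IntervalIntegrable (fun σ => Phi ν (l*σ)) volume 0 κ := by
        have e1 : (0:ℝ)/l = 0 := by simp
        have e2 : (l*κ)/l = κ := by rw [mul_comm, mul_div_assoc, div_self (ne_of_gt hl.1), mul_one]
        rwa [e1, e2] at h2
      exact (intervalIntegrable_iff_integrableOn_Ioo_of_le hκpos.le).1 h3
    -- step4 scaling
    have step4 : ∫ τ in Ioo (0:ℝ) (l*κ), f τ = l * ∫ σ in Ioo (0:ℝ) κ, (Phi ν (l*σ) - z) := by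
      have h1 : ∫ σ in (0:ℝ)..κ, f (l*σ) = l⁻¹ • ∫ τ in (l*0)..(l*κ), f τ :=
        intervalIntegral.integral_comp_mul_left f (ne_of_gt hl.1)
      rw [mul_zero] at h1
      have h2 : ∫ τ in (0:ℝ)..(l*κ), f τ = ∫ τ in Ioo (0:ℝ) (l*κ), f τ := by
        rw [intervalIntegral.integral_of_le hlκpos.le, integral_Ioc_eq_integral_Ioo]
      have h3 : ∫ σ in (0:ℝ)..κ, f (l*σ) = ∫ σ in Ioo (0:ℝ) κ, f (l*σ) := by
        rw [intervalIntegral.integral_of_le hκpos.le, integral_Ioc_eq_integral_Ioo]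
      rw [h3, h2] at h1
      have : ∫ σ in Ioo (0:ℝ) κ, f (l*σ) = ∫ σ in Ioo (0:ℝ) κ, (Phi ν (l*σ) - z) := rfl
      rw [this] at h1
      rw [h1, smul_eq_mul, ← mul_assoc, mul_inv_cancel₀ (ne_of_gt hl.1), one_mul]
    -- step5 decompose
    have step5 : ∫ σ in Ioo (0:ℝ) κ, (Phi ν (l*σ) - z)
        = (∫ σ in Ioo (0:ℝ) κ, f σ) + ∫ σ in Ioo (0:ℝ) κ, (Phi ν (l*σ) - Phi ν σ) := by
      rw [← integral_add (hfInt.mono_set hsub)]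
      · apply setIntegral_congr_fun measurableSet_Ioo
        intro σ hσ
        simp only [hf]
        ring
      · exact hPhil.sub ((phi_int ν hν).mono_set hsub)
    -- step6 indicator form
    have step6 : ∫ σ in Ioo (0:ℝ) κ, (Phi ν (l*σ) - Phi ν σ)
        = ∫ σ in Ioo (0:ℝ) 1, (Ioo (0:ℝ) κ).indicator (fun σ => Phi ν (l*σ) - Phi ν σ) σ := by
      rw [integral_indicator measurableSet_Ioo,
        Measure.restrict_restrict measurableSet_Ioo, inter_eq_self_of_subset_left hsub]
    have heq := step2
    rw [step4, step5] at heq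
    have heq2 : (1 - l) * (∫ τ in Ioo (0:ℝ) κ, f τ)
        = l * (∫ σ in Ioo (0:ℝ) κ, (Phi ν (l*σ) - Phi ν σ)) + ∫ τ in Ico (l*κ) κ, f τ := by
      linear_combination heq
    rw [step1, ← step6]
    linarith [step3]
end part4

section part5
variable (ν : Measure ℝ) [IsProbabilityMeasure ν] (c : ℝ → ℝ)

lemma ct_abs_le (hc : MonotoneOn c (Icc (0:ℝ) 1)) (q : ℝ) :
    |ct c q| ≤ max |c 0| |c 1| := by
  have h0 : c 0 ≤ ct c q := hc (by norm_num) (clamp_mem q) (clamp_mem q).1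
  have h1 : ct c q ≤ c 1 := hc (clamp_mem q) (by norm_num) (clamp_mem q).2
  rw [abs_le]
  constructor
  · calc -(max |c 0| |c 1|) ≤ -|c 0| := by simp [le_max_left]
    _ ≤ c 0 := neg_abs_le _
    _ ≤ ct c q := h0
  · calc ct c q ≤ c 1 := h1
    _ ≤ |c 1| := le_abs_self _
    _ ≤ max |c 0| |c 1| := le_max_right _ _

lemma integral_tmax (z : ℝ) :
    ∫ v, max (v - z) 0 ∂ν = ∫ τ in Ioo (0:ℝ) 1, max (Phi ν τ - z) 0 :=
  integral_phi_eq ν (fun v => max (v - z) 0)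
    (((continuous_id.sub continuous_const).max continuous_const).aestronglyMeasurable)

lemma FB_swap (hc : MonotoneOn c (Icc (0:ℝ) 1)) (hν : Integrable (fun v : ℝ => v) ν) :
    FB c ν = ∫ q in Ioo (0:ℝ) 1, (∫ v, max (v - ct c q) 0 ∂ν) := by
  have hctm : Monotone (ct c) := ct_mono c hc
  set M := max |c 0| |c 1| with hM
  have hM0 : 0 ≤ M := le_trans (abs_nonneg _) (le_max_left _ _)
  have h1 : ∀ v : ℝ, ∫ q in (0:ℝ)..1, max (v - c q) 0
      = ∫ q in Ioo (0:ℝ) 1, max (v - ct c q) 0 := by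
    intro v
    rw [intervalIntegral.integral_of_le (by norm_num : (0:ℝ) ≤ 1), integral_Ioc_eq_integral_Ioo]
    apply setIntegral_congr_fun measurableSet_Ioo
    intro q hq
    simp only
    rw [ct_eq c (Ioo_subset_Icc_self hq)]
  have hmeas : AEStronglyMeasurable (Function.uncurry (fun (v q : ℝ) => max (v - ct c q) 0))
      (ν.prod (volume.restrict (Ioo (0:ℝ) 1))) :=
    ((measurable_fst.sub (hctm.measurable.comp measurable_snd)).max
      measurable_const).aestronglyMeasurable
  have hptbound : ∀ v q : ℝ, ‖max (v - ct c q) 0‖ ≤ |v| + M := by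
    intro v q
    rw [Real.norm_eq_abs, abs_of_nonneg (le_max_right _ _)]
    apply max_le _ (by positivity)
    have := ct_abs_le c hc q
    have := neg_abs_le (ct c q)
    have := abs_le.1 (ct_abs_le c hc q)
    have hv := le_abs_self v
    linarith [this.1]
  have hint_v : ∀ v : ℝ, Integrable (fun q => max (v - ct c q) 0)
      (volume.restrict (Ioo (0:ℝ) 1)) := by
    intro v
    apply Integrable.mono' (integrable_const (|v| + M))
      (((measurable_const.sub hctm.measurable).max measurable_const).aestronglyMeasurable)
    exact ae_of_all _ (fun q => hptbound v q)
  have hint : Integrable (Function.uncurry (fun (v q : ℝ) => max (v - ct c q) 0))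
      (ν.prod (volume.restrict (Ioo (0:ℝ) 1))) := by
    rw [integrable_prod_iff hmeas]
    constructor
    · exact ae_of_all _ (fun v => hint_v v)
    · have heq : (fun v => ∫ q in Ioo (0:ℝ) 1, ‖max (v - ct c q) 0‖)
          = fun v => ∫ q in Ioo (0:ℝ) 1, max (v - ct c q) 0 := by
        funext v
        congr 1
        funext q
        rw [Real.norm_eq_abs, abs_of_nonneg (le_max_right _ _)]
      simp only [Function.uncurry_apply_pair]
      rw [heq]
      apply Integrable.mono' (hν.abs.add (integrable_const M))
      · apply Measurable.aestronglyMeasurable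
        apply Monotone.measurable
        intro a b hab
        apply integral_mono_ae (hint_v a) (hint_v b)
        apply ae_of_all
        intro q
        apply max_le_max _ le_rfl
        linarith
      · apply ae_of_all
        intro v
        have hnn : 0 ≤ ∫ q in Ioo (0:ℝ) 1, max (v - ct c q) 0 :=
          integral_nonneg (fun q => le_max_right _ _)
        rw [Real.norm_eq_abs, abs_of_nonneg hnn]
        show _ ≤ |v| + M
        calc ∫ q in Ioo (0:ℝ) 1, max (v - ct c q) 0
            ≤ ∫ _q in Ioo (0:ℝ) 1, (|v| + M) := by
              apply setIntegral_mono_on (hint_v v)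
                (integrableOn_const (by simp [Real.volume_Ioo]))
                measurableSet_Ioo
              intro q _
              have := hptbound v q
              rwa [Real.norm_eq_abs, abs_of_nonneg (le_max_right _ _)] at this
        _ = |v| + M := by simp [Real.volume_Ioo]
  unfold FB
  simp_rw [h1]
  exact integral_integral_swap hint

section part6
variable (ν : Measure ℝ) [IsProbabilityMeasure ν] (c : ℝ → ℝ)

lemma Fl_int (hν : Integrable (fun v : ℝ => v) ν) {l : ℝ} (hl : l ∈ Ioo (0:ℝ) 1) :
    IntegrableOn (fun σ : ℝ => Phi ν (l*σ)) (Ioo (0:ℝ) 1) := by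
  have h1 : IntervalIntegrable (Phi ν) volume 0 l :=
    (intervalIntegrable_iff_integrableOn_Ioo_of_le hl.1.le).2
      ((phi_int ν hν).mono_set (fun x hx => ⟨hx.1, lt_trans hx.2 hl.2⟩))
  have h2 := h1.comp_mul_left (c := l)
  have e1 : (0:ℝ)/l = 0 := by simp
  have e2 : l/l = 1 := div_self (ne_of_gt hl.1)
  rw [e1, e2] at h2
  exact (intervalIntegrable_iff_integrableOn_Ioo_of_le (by norm_num)).1 h2

lemma F_meas {l : ℝ} : Measurable (fun σ : ℝ => Phi ν (l*σ) - Phi ν σ) :=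
  ((phi_meas ν).comp (measurable_const_mul l)).sub (phi_meas ν)

lemma F_int (hν : Integrable (fun v : ℝ => v) ν) {l : ℝ} (hl : l ∈ Ioo (0:ℝ) 1) :
    IntegrableOn (fun σ : ℝ => Phi ν (l*σ) - Phi ν σ) (Ioo (0:ℝ) 1) :=
  (Fl_int ν hν hl).sub (phi_int ν hν)

lemma F_nonneg {l : ℝ} (hl : l ∈ Ioo (0:ℝ) 1) {σ : ℝ} (hσ : σ ∈ Ioo (0:ℝ) 1) :
    0 ≤ Phi ν (l*σ) - Phi ν σ := by
  have hlσ : l*σ ∈ Ioo (0:ℝ) 1 :=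
    ⟨mul_pos hl.1 hσ.1, lt_trans (by nlinarith [hl.2, hσ.1]) hσ.2⟩
  have := phi_antiOn ν hlσ hσ (by nlinarith [hl.2, hσ.1])
  linarith

lemma κt_anti (hc : MonotoneOn c (Icc (0:ℝ) 1)) :
    Antitone (fun q => tl ν (ct c q)) :=
  fun a b hab => tl_anti ν (ct_mono c hc hab)

lemma κt_meas (hc : MonotoneOn c (Icc (0:ℝ) 1)) :
    Measurable (fun q => tl ν (ct c q)) := (κt_anti ν c hc).measurable

lemma D_swap (hc : MonotoneOn c (Icc (0:ℝ) 1)) (hν : Integrable (fun v : ℝ => v) ν)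
    {l : ℝ} (hl : l ∈ Ioo (0:ℝ) 1) :
    ∫ q in Ioo (0:ℝ) 1, (∫ σ in Ioo (0:ℝ) 1,
        (Ioo (0:ℝ) (tl ν (ct c q))).indicator (fun σ => Phi ν (l*σ) - Phi ν σ) σ)
      = ∫ σ in Ioo (0:ℝ) 1, (Phi ν (l*σ) - Phi ν σ)
          * ((volume.restrict (Ioo (0:ℝ) 1)) {q : ℝ | σ < tl ν (ct c q)}).toReal := by
  set F : ℝ → ℝ := fun σ => Phi ν (l*σ) - Phi ν σ with hF
  set W : ℝ → ℝ → ℝ := fun q σ => (Ioo (0:ℝ) (tl ν (ct c q))).indicator F σ with hW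
  have hFm : Measurable F := F_meas ν
  have hFi : IntegrableOn F (Ioo (0:ℝ) 1) := F_int ν hν hl
  have hSet : MeasurableSet {p : ℝ × ℝ | 0 < p.2 ∧ p.2 < tl ν (ct c p.1)} :=
    (measurableSet_lt measurable_const measurable_snd).inter
      (measurableSet_lt measurable_snd ((κt_meas ν c hc).comp measurable_fst))
  have huncurry : Function.uncurry W
      = Set.indicator {p : ℝ × ℝ | 0 < p.2 ∧ p.2 < tl ν (ct c p.1)} (F ∘ Prod.snd) := by
    funext p
    rcases p with ⟨q, σ⟩
    by_cases h : σ ∈ Ioo (0:ℝ) (tl ν (ct c q))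
    · rw [Function.uncurry_apply_pair]
      rw [hW]
      simp only
      rw [indicator_of_mem h, indicator_of_mem (by exact ⟨h.1, h.2⟩)]
      rfl
    · rw [Function.uncurry_apply_pair, hW]
      simp only
      rw [indicator_of_notMem h, indicator_of_notMem (by
        intro hmem
        exact h (mem_Ioo.2 ⟨hmem.1, hmem.2⟩))]
  have hWmeas : AEStronglyMeasurable (Function.uncurry W)
      ((volume.restrict (Ioo (0:ℝ) 1)).prod (volume.restrict (Ioo (0:ℝ) 1))) := by
    rw [huncurry]
    exact ((hFm.comp measurable_snd).indicator hSet).aestronglyMeasurable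
  have hWq_int : ∀ q : ℝ, Integrable (W q) (volume.restrict (Ioo (0:ℝ) 1)) := by
    intro q
    exact hFi.indicator measurableSet_Ioo
  have hWnorm_le : ∀ q : ℝ, (∫ σ in Ioo (0:ℝ) 1, ‖W q σ‖) ≤ ∫ σ in Ioo (0:ℝ) 1, ‖F σ‖ := by
    intro q
    apply setIntegral_mono_on (hWq_int q).norm hFi.norm measurableSet_Ioo
    intro σ _
    rw [hW]
    simp only
    rw [Real.norm_eq_abs, Real.norm_eq_abs]
    by_cases h : σ ∈ Ioo (0:ℝ) (tl ν (ct c q))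
    · rw [indicator_of_mem h]
    · rw [indicator_of_notMem h]
      simp only [abs_zero]
      exact abs_nonneg _
  have hWint : Integrable (Function.uncurry W)
      ((volume.restrict (Ioo (0:ℝ) 1)).prod (volume.restrict (Ioo (0:ℝ) 1))) := by
    rw [integrable_prod_iff hWmeas]
    constructor
    · exact ae_of_all _ (fun q => hWq_int q)
    · apply Integrable.mono' (integrable_const (∫ σ in Ioo (0:ℝ) 1, ‖F σ‖))
      · apply Measurable.aestronglyMeasurable
        apply Antitone.measurable
        intro a b hab
        apply integral_mono_ae (hWq_int b).norm (hWq_int a).norm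
        apply ae_of_all
        intro σ
        simp only [hW, Real.norm_eq_abs]
        rcases le_or_gt (tl ν (ct c b)) (tl ν (ct c a)) with hκ | hκ
        · by_cases hmem : σ ∈ Ioo (0:ℝ) (tl ν (ct c b))
          · rw [indicator_of_mem hmem, indicator_of_mem (mem_Ioo.2 ⟨hmem.1, lt_of_lt_of_le hmem.2 hκ⟩)]
          · rw [indicator_of_notMem hmem]
            simp only [abs_zero]
            exact abs_nonneg _
        · exact absurd (κt_anti ν c hc hab) (not_le.2 hκ)
      · apply ae_of_all
        intro q
        rw [Real.norm_eq_abs, abs_of_nonneg (integral_nonneg (fun σ => norm_nonneg _))]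
        exact hWnorm_le q
  rw [integral_integral_swap hWint]
  apply integral_congr_ae
  filter_upwards [ae_restrict_mem measurableSet_Ioo] with σ hσ
  have hWσ : (fun q => W q σ) = fun q => Set.indicator {q : ℝ | σ < tl ν (ct c q)} (fun _ => F σ) q := by
    funext q
    rw [hW]
    simp only
    by_cases h : σ < tl ν (ct c q)
    · rw [indicator_of_mem (mem_Ioo.2 ⟨hσ.1, h⟩),
        Set.indicator_of_mem (show q ∈ {q : ℝ | σ < tl ν (ct c q)} from h)]
    · rw [indicator_of_notMem (fun hmem => h (mem_Ioo.1 hmem).2),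
        Set.indicator_of_notMem (show q ∉ {q : ℝ | σ < tl ν (ct c q)} from h)]
  rw [hWσ, integral_indicator_const _ (measurableSet_lt measurable_const (κt_meas ν c hc))]
  rw [smul_eq_mul, mul_comm]
  rfl

end part6

section part7
variable (ν : Measure ℝ) [IsProbabilityMeasure ν] (c : ℝ → ℝ)

lemma acc_ne_top (p : ℝ) : volume {q : ℝ | q ∈ Icc (0:ℝ) 1 ∧ c q ≤ p} ≠ ⊤ := by
  apply ne_of_lt
  calc volume {q : ℝ | q ∈ Icc (0:ℝ) 1 ∧ c q ≤ p} ≤ volume (Icc (0:ℝ) 1) :=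
        measure_mono (fun q hq => hq.1)
  _ < ⊤ := by simp [Real.volume_Icc]

lemma xx_le_acc (hc : MonotoneOn c (Icc (0:ℝ) 1)) {σ : ℝ} (hσ : σ ∈ Ioo (0:ℝ) 1) :
    ((volume.restrict (Ioo (0:ℝ) 1)) {q : ℝ | σ < tl ν (ct c q)}).toReal
      ≤ accProb c (Phi ν σ) := by
  rw [Measure.restrict_apply (measurableSet_lt measurable_const (κt_meas ν c hc))]
  apply ENNReal.toReal_mono (acc_ne_top c (Phi ν σ))
  apply measure_mono
  rintro q ⟨hq1, hq2⟩
  have hq2' : q ∈ Icc (0:ℝ) 1 := Ioo_subset_Icc_self hq2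
  have : ct c q ≤ Phi ν σ := phi_ge ν hσ hq1
  rw [ct_eq c hq2'] at this
  exact ⟨hq2', this⟩

lemma xx_nonneg (σ : ℝ) :
    0 ≤ ((volume.restrict (Ioo (0:ℝ) 1)) {q : ℝ | σ < tl ν (ct c q)}).toReal :=
  ENNReal.toReal_nonneg

lemma xx_anti : Antitone (fun σ => ((volume.restrict (Ioo (0:ℝ) 1)) {q : ℝ | σ < tl ν (ct c q)}).toReal) := by
  intro a b hab
  apply ENNReal.toReal_mono (measure_ne_top _ _)
  exact measure_mono (fun q hq => lt_of_le_of_lt hab hq)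

lemma BBPhi_int (hc : MonotoneOn c (Icc (0:ℝ) 1)) (hν : Integrable (fun v : ℝ => v) ν) :
    IntegrableOn (fun τ => BB c (Phi ν τ)) (Ioo (0:ℝ) 1) := by
  apply Integrable.mono' ((phi_int ν hν).abs.add (integrable_const |c 0|))
  · exact ((BB_meas c hc).comp (phi_meas ν)).aestronglyMeasurable
  · apply ae_of_all
    intro τ
    rw [Real.norm_eq_abs, abs_of_nonneg (BB_nonneg c hc _)]
    calc BB c (Phi ν τ) ≤ max (Phi ν τ - c 0) 0 := BB_le c hc _
    _ ≤ |Phi ν τ| + |c 0| := by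
        apply max_le _ (by positivity)
        have h1 := le_abs_self (Phi ν τ)
        have h2 := neg_abs_le (c 0)
        linarith

lemma buyer_chain (hc : MonotoneOn c (Icc (0:ℝ) 1)) (hν : Integrable (fun v : ℝ => v) ν)
    {l : ℝ} (hl : l ∈ Ioo (0:ℝ) 1) :
    l * ∫ σ in Ioo (0:ℝ) 1, (Phi ν (l*σ) - Phi ν σ)
          * ((volume.restrict (Ioo (0:ℝ) 1)) {q : ℝ | σ < tl ν (ct c q)}).toReal
      ≤ uB c ν := by
  have hBB : IntegrableOn (fun σ => BB c (Phi ν (l*σ))) (Ioo (0:ℝ) 1) := by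
    apply Integrable.mono' ((Fl_int ν hν hl).abs.add (integrable_const |c 0|))
    · exact ((BB_meas c hc).comp ((phi_meas ν).comp (measurable_const_mul l))).aestronglyMeasurable
    · apply ae_of_all
      intro σ
      rw [Real.norm_eq_abs, abs_of_nonneg (BB_nonneg c hc _)]
      calc BB c (Phi ν (l*σ)) ≤ max (Phi ν (l*σ) - c 0) 0 := BB_le c hc _
      _ ≤ |Phi ν (l*σ)| + |c 0| := by
          apply max_le _ (by positivity)
          have h1 := le_abs_self (Phi ν (l*σ))
          have h2 := neg_abs_le (c 0)
          linarith
  have hFxx_int : IntegrableOn (fun σ => (Phi ν (l*σ) - Phi ν σ)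
      * ((volume.restrict (Ioo (0:ℝ) 1)) {q : ℝ | σ < tl ν (ct c q)}).toReal) (Ioo (0:ℝ) 1) := by
    apply Integrable.mono' (F_int ν hν hl).abs
    · exact ((F_meas ν).mul (xx_anti ν c).measurable).aestronglyMeasurable
    · apply ae_of_all
      intro σ
      rw [Real.norm_eq_abs, abs_mul]
      have h1 : |((volume.restrict (Ioo (0:ℝ) 1)) {q : ℝ | σ < tl ν (ct c q)}).toReal| ≤ 1 := by
        rw [abs_of_nonneg (xx_nonneg ν c σ)]
        apply ENNReal.toReal_le_of_le_ofReal (by norm_num)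
        calc (volume.restrict (Ioo (0:ℝ) 1)) {q : ℝ | σ < tl ν (ct c q)}
            ≤ (volume.restrict (Ioo (0:ℝ) 1)) univ := measure_mono (subset_univ _)
        _ ≤ ENNReal.ofReal 1 := by
            rw [Measure.restrict_apply_univ]
            simp [Real.volume_Ioo]
      calc |Phi ν (l*σ) - Phi ν σ| * |((volume.restrict (Ioo (0:ℝ) 1)) {q : ℝ | σ < tl ν (ct c q)}).toReal|
          ≤ |Phi ν (l*σ) - Phi ν σ| * 1 := mul_le_mul_of_nonneg_left h1 (abs_nonneg _)
      _ = |Phi ν (l*σ) - Phi ν σ| := mul_one _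
  have hptw : ∀ σ ∈ Ioo (0:ℝ) 1, (Phi ν (l*σ) - Phi ν σ)
      * ((volume.restrict (Ioo (0:ℝ) 1)) {q : ℝ | σ < tl ν (ct c q)}).toReal
      ≤ BB c (Phi ν (l*σ)) := by
    intro σ hσ
    calc (Phi ν (l*σ) - Phi ν σ)
        * ((volume.restrict (Ioo (0:ℝ) 1)) {q : ℝ | σ < tl ν (ct c q)}).toReal
        ≤ (Phi ν (l*σ) - Phi ν σ) * accProb c (Phi ν σ) :=
          mul_le_mul_of_nonneg_left (xx_le_acc ν c hc hσ) (F_nonneg ν hl hσ)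
    _ ≤ BB c (Phi ν (l*σ)) := le_BB c hc _ _
  have h2 : ∫ σ in Ioo (0:ℝ) 1, (Phi ν (l*σ) - Phi ν σ)
        * ((volume.restrict (Ioo (0:ℝ) 1)) {q : ℝ | σ < tl ν (ct c q)}).toReal
      ≤ ∫ σ in Ioo (0:ℝ) 1, BB c (Phi ν (l*σ)) :=
    setIntegral_mono_on hFxx_int hBB measurableSet_Ioo hptw
  have h3 : l * ∫ σ in Ioo (0:ℝ) 1, BB c (Phi ν (l*σ)) = ∫ τ in Ioo (0:ℝ) l, BB c (Phi ν τ) := by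
    have h1 : ∫ σ in (0:ℝ)..1, BB c (Phi ν (l*σ)) = l⁻¹ • ∫ τ in (l*0)..(l*1), BB c (Phi ν τ) :=
      intervalIntegral.integral_comp_mul_left (fun τ => BB c (Phi ν τ)) (ne_of_gt hl.1)
    rw [mul_zero, mul_one] at h1
    rw [intervalIntegral.integral_of_le (by norm_num : (0:ℝ) ≤ 1), integral_Ioc_eq_integral_Ioo] at h1
    rw [intervalIntegral.integral_of_le hl.1.le, integral_Ioc_eq_integral_Ioo] at h1
    rw [h1, smul_eq_mul, ← mul_assoc, mul_inv_cancel₀ (ne_of_gt hl.1), one_mul]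
  have h4 : ∫ τ in Ioo (0:ℝ) l, BB c (Phi ν τ) ≤ ∫ τ in Ioo (0:ℝ) 1, BB c (Phi ν τ) := by
    apply setIntegral_mono_set (BBPhi_int ν c hc hν)
    · apply ae_restrict_of_ae
      exact ae_of_all _ (fun τ => BB_nonneg c hc _)
    · exact HasSubset.Subset.eventuallyLE (fun x hx => ⟨hx.1, lt_trans hx.2 hl.2⟩)
  have h5 : ∫ τ in Ioo (0:ℝ) 1, BB c (Phi ν τ) = uB c ν := by
    have := integral_phi_eq ν (BB c) (BB_meas c hc).aestronglyMeasurable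
    rw [← this]
    rfl
  calc l * ∫ σ in Ioo (0:ℝ) 1, (Phi ν (l*σ) - Phi ν σ)
        * ((volume.restrict (Ioo (0:ℝ) 1)) {q : ℝ | σ < tl ν (ct c q)}).toReal
      ≤ l * ∫ σ in Ioo (0:ℝ) 1, BB c (Phi ν (l*σ)) :=
        mul_le_mul_of_nonneg_left h2 hl.1.le
  _ = ∫ τ in Ioo (0:ℝ) l, BB c (Phi ν τ) := h3
  _ ≤ ∫ τ in Ioo (0:ℝ) 1, BB c (Phi ν τ) := h4
  _ = uB c ν := h5

lemma uS_eq : uS c ν = ∫ q in Ioo (0:ℝ) 1, SSf ν (ct c q) := by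
  unfold uS
  rw [intervalIntegral.integral_of_le (by norm_num : (0:ℝ) ≤ 1), integral_Ioc_eq_integral_Ioo]
  apply setIntegral_congr_fun measurableSet_Ioo
  intro q hq
  simp only
  rw [SSf, ct_eq c (Ioo_subset_Icc_self hq)]
  rfl

end part7

end part5

theorem stmt7 (c : ℝ → ℝ) (hc : MonotoneOn c (Icc (0:ℝ) 1))
    (ν : Measure ℝ) [IsProbabilityMeasure ν]
    (hν : Integrable (fun v : ℝ => v) ν)
    (l : ℝ) (hl : l ∈ Ioo (0:ℝ) 1) :
    (1 - l) * FB c ν ≤ uB c ν + uS c ν * Real.log (1 / l) := by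
  have hL : 0 < Real.log (1/l) := Real.log_pos (by rw [lt_div_iff₀ hl.1, one_mul]; exact hl.2)
  set M := max |c 0| |c 1| with hM
  have hM0 : 0 ≤ M := le_trans (abs_nonneg _) (le_max_left _ _)
  set H : ℝ → ℝ := fun q => ∫ τ in Ioo (0:ℝ) 1, max (Phi ν τ - ct c q) 0 with hH
  set D : ℝ → ℝ := fun q => ∫ σ in Ioo (0:ℝ) 1,
      (Ioo (0:ℝ) (tl ν (ct c q))).indicator (fun σ => Phi ν (l*σ) - Phi ν σ) σ with hD
  set S : ℝ → ℝ := fun q => SSf ν (ct c q) with hS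
  have hvol : volume (Ioo (0:ℝ) 1) ≠ ⊤ := by simp [Real.volume_Ioo]
  -- FB rewriting
  have hFB : FB c ν = ∫ q in Ioo (0:ℝ) 1, H q := by
    rw [FB_swap ν c hc hν]
    apply setIntegral_congr_fun measurableSet_Ioo
    intro q _
    simp only [hH]
    exact integral_tmax ν (ct c q)
  -- pointwise inequality
  have hq : ∀ q : ℝ, (1-l) * H q ≤ l * D q + Real.log (1/l) * S q :=
    fun q => perq ν hν hl (ct c q)
  -- integrability of H
  have hctm : Monotone (ct c) := ct_mono c hc
  have hptb : ∀ z q : ℝ, |max (Phi ν z - ct c q) 0| ≤ |Phi ν z| + M := by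
    intro z q
    rw [abs_of_nonneg (le_max_right _ _)]
    apply max_le _ (by positivity)
    have h1 := le_abs_self (Phi ν z)
    have h2 := (abs_le.1 (ct_abs_le c hc q)).1
    linarith
  have hH_int_q : ∀ q : ℝ, IntegrableOn (fun τ => max (Phi ν τ - ct c q) 0) (Ioo (0:ℝ) 1) := by
    intro q
    apply Integrable.mono' ((phi_int ν hν).abs.add (integrable_const M))
    · exact (((phi_meas ν).sub measurable_const).max measurable_const).aestronglyMeasurable
    · exact ae_of_all _ (fun τ => by rw [Real.norm_eq_abs]; exact hptb τ q)
  have hH_anti : Antitone H := by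
    intro a b hab
    apply integral_mono_ae (hH_int_q b) (hH_int_q a)
    apply ae_of_all
    intro τ
    have := hctm hab
    apply max_le_max _ le_rfl
    linarith
  have hH_nonneg : ∀ q, 0 ≤ H q :=
    fun q => integral_nonneg (fun τ => le_max_right _ _)
  have hCH_int : IntegrableOn (fun τ => |Phi ν τ| + M) (Ioo (0:ℝ) 1) :=
    (phi_int ν hν).abs.add (integrable_const M)
  have hH_bound : ∀ q, H q ≤ ∫ τ in Ioo (0:ℝ) 1, (|Phi ν τ| + M) := by
    intro q
    apply setIntegral_mono_on (hH_int_q q) hCH_int measurableSet_Ioo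
    intro τ _
    calc max (Phi ν τ - ct c q) 0 ≤ |max (Phi ν τ - ct c q) 0| := le_abs_self _
    _ ≤ |Phi ν τ| + M := hptb τ q
  have hH_int : Integrable H (volume.restrict (Ioo (0:ℝ) 1)) := by
    apply Integrable.mono' (integrable_const (∫ τ in Ioo (0:ℝ) 1, (|Phi ν τ| + M)))
      hH_anti.measurable.aestronglyMeasurable
    apply ae_of_all
    intro q
    rw [Real.norm_eq_abs, abs_of_nonneg (hH_nonneg q)]
    exact hH_bound q
  -- integrability of D
  have hFi : IntegrableOn (fun σ => Phi ν (l*σ) - Phi ν σ) (Ioo (0:ℝ) 1) := F_int ν hν hl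
  have hD_int_q : ∀ q : ℝ, Integrable
      ((Ioo (0:ℝ) (tl ν (ct c q))).indicator (fun σ => Phi ν (l*σ) - Phi ν σ))
      (volume.restrict (Ioo (0:ℝ) 1)) :=
    fun q => hFi.indicator measurableSet_Ioo
  have hD_anti : Antitone D := by
    intro a b hab
    apply integral_mono_ae (hD_int_q b) (hD_int_q a)
    filter_upwards [ae_restrict_mem measurableSet_Ioo] with σ hσ
    have hκ : tl ν (ct c b) ≤ tl ν (ct c a) := κt_anti ν c hc hab
    by_cases hmem : σ ∈ Ioo (0:ℝ) (tl ν (ct c b))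
    · rw [indicator_of_mem hmem,
        indicator_of_mem (mem_Ioo.2 ⟨hmem.1, lt_of_lt_of_le hmem.2 hκ⟩)]
    · rw [indicator_of_notMem hmem]
      apply indicator_nonneg
      intro σ' hσ'
      exact F_nonneg ν hl ⟨hσ'.1, lt_of_lt_of_le hσ'.2 (tl_le_one ν _)⟩
  have hD_nonneg : ∀ q, 0 ≤ D q := by
    intro q
    apply integral_nonneg_of_ae
    filter_upwards [ae_restrict_mem measurableSet_Ioo] with σ hσ
    apply indicator_nonneg
    intro σ' hσ'
    exact F_nonneg ν hl ⟨hσ'.1, lt_of_lt_of_le hσ'.2 (tl_le_one ν _)⟩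
  have hD_bound : ∀ q, D q ≤ ∫ σ in Ioo (0:ℝ) 1, |Phi ν (l*σ) - Phi ν σ| := by
    intro q
    apply integral_mono_ae (hD_int_q q) hFi.abs
    apply ae_of_all
    intro σ
    by_cases hmem : σ ∈ Ioo (0:ℝ) (tl ν (ct c q))
    · rw [indicator_of_mem hmem]; exact le_abs_self _
    · rw [indicator_of_notMem hmem]; exact abs_nonneg _
  have hD_int : Integrable D (volume.restrict (Ioo (0:ℝ) 1)) := by
    apply Integrable.mono' (integrable_const (∫ σ in Ioo (0:ℝ) 1, |Phi ν (l*σ) - Phi ν σ|))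
      hD_anti.measurable.aestronglyMeasurable
    apply ae_of_all
    intro q
    rw [Real.norm_eq_abs, abs_of_nonneg (hD_nonneg q)]
    exact hD_bound q
  -- integrability of S
  have hS_anti : Antitone S := fun a b hab => SSf_anti ν hν (hctm hab)
  have hS_nonneg : ∀ q, 0 ≤ S q := fun q => SSf_nonneg ν hν _
  have hS_bound : ∀ q, S q ≤ (∫ v, |v| ∂ν) + M := by
    intro q
    calc S q ≤ (∫ v, |v| ∂ν) + |ct c q| := SSf_le ν hν _
    _ ≤ (∫ v, |v| ∂ν) + M := by linarith [ct_abs_le c hc q]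
  have hS_int : Integrable S (volume.restrict (Ioo (0:ℝ) 1)) := by
    apply Integrable.mono' (integrable_const ((∫ v, |v| ∂ν) + M))
      hS_anti.measurable.aestronglyMeasurable
    apply ae_of_all
    intro q
    rw [Real.norm_eq_abs, abs_of_nonneg (hS_nonneg q)]
    exact hS_bound q
  -- main integral inequality
  have hmain : ∫ q in Ioo (0:ℝ) 1, (1-l) * H q
      ≤ ∫ q in Ioo (0:ℝ) 1, (l * D q + Real.log (1/l) * S q) := by
    apply setIntegral_mono_on (hH_int.const_mul (1-l))
      ((hD_int.const_mul l).add (hS_int.const_mul (Real.log (1/l)))) measurableSet_Ioo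
    intro q _
    exact hq q
  rw [integral_const_mul] at hmain
  rw [integral_add (hD_int.const_mul l) (hS_int.const_mul (Real.log (1/l)))] at hmain
  rw [integral_const_mul, integral_const_mul] at hmain
  rw [← hFB] at hmain
  -- buyer side
  have hDbuyer : l * ∫ q in Ioo (0:ℝ) 1, D q ≤ uB c ν := by
    rw [hD]
    simp only
    rw [D_swap ν c hc hν hl]
    exact buyer_chain ν c hc hν hl
  -- seller side
  have hSus : ∫ q in Ioo (0:ℝ) 1, S q = uS c ν := (uS_eq ν c).symm
  rw [hSus] at hmain
  have hcomm : Real.log (1/l) * uS c ν = uS c ν * Real.log (1/l) := mul_comm _ _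
  linarith
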